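/- A connected bipartite graph is closed (i.e., admits a labeling of its vertices by 1,...,n making it closed with respect to that labeling) if and only if it is a path graph. -/

import Mathlib

/-- A simple graph on `Fin n` is *closed with respect to the given labeling*. -/
def SimpleGraph.IsClosed {n : ℕ} (G : SimpleGraph (Fin n)) : Prop :=
  ∀ ⦃i j k l : Fin n⦄, G.Adj i j → G.Adj k l → i < j → k < l →
    (i = k → j ≠ l → G.Adj j l) ∧ (j = l → i ≠ k → G.Adj i k)

namespace ClosedPathAux

variable {n : ℕ} {H : SimpleGraph (Fin n)}

/-- triangle-free -/
def TriFree {n : ℕ} (H : SimpleGraph (Fin n)) : Prop :=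
  ∀ a b c : Fin n, H.Adj a b → H.Adj b c → H.Adj a c → False

lemma uniq_up (hcl : H.IsClosed) (htri : TriFree H) {i j l : Fin n}
    (h1 : H.Adj i j) (h2 : H.Adj i l) (hij : i < j) (hil : i < l) : j = l := by
  by_contra hne
  exact htri i j l h1 ((hcl h1 h2 hij hil).1 rfl hne) h2

lemma uniq_down (hcl : H.IsClosed) (htri : TriFree H) {i k j : Fin n}
    (h1 : H.Adj i j) (h2 : H.Adj k j) (hij : i < j) (hkj : k < j) : i = k := by
  by_contra hne
  exact htri i k j ((hcl h1 h2 hij hkj).2 rfl hne) h2 h1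

/-- Every nonzero vertex of a closed, triangle-free, connected graph has a
neighbour strictly below it. -/
lemma exists_down (hcl : H.IsClosed) (htri : TriFree H) (hconn : H.Connected)
    {j : Fin n} (hj : 0 < j.val) :
    ∃ i : Fin n, i < j ∧ H.Adj i j := by
  have hn : 0 < n := j.pos
  set z : Fin n := ⟨0, hn⟩ with hz
  set r : Fin n → Fin n → Prop := fun u w => H.Adj u w ∧ u < w with hr
  set P : Fin n → Prop := fun v => ∀ u : Fin n, Relation.ReflTransGen r u v →
      u.val = 0 ∨ ∃ c, c < u ∧ H.Adj c u with hP
  have hPz : P z := by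
    intro u hu
    left
    induction hu using Relation.ReflTransGen.head_induction_on with
    | refl => rfl
    | head hs _ ih =>
      exact absurd (Fin.lt_def.mp hs.2) (by omega)
  have step : ∀ {x y : Fin n}, H.Adj x y → P x → P y := by
    intro x y h hx
    rcases h.ne.lt_or_gt with hlt | hgt
    · intro u hu
      rcases hu.cases_tail with rfl | ⟨c, hc1, hc2⟩
      · exact Or.inr ⟨x, hlt, h⟩
      · have hcx : c = x := uniq_down hcl htri hc2.1 h hc2.2 hlt
        exact hx u (hcx ▸ hc1)
    · intro u hu
      exact hx u (hu.tail ⟨h.symm, hgt⟩)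
  have walkLem : ∀ {x b : Fin n}, H.Walk x b → P x → P b := by
    intro x b w
    induction w with
    | nil => exact id
    | cons h _ ih => exact fun hx => ih (step h hx)
  obtain ⟨w⟩ := hconn.preconnected z j
  rcases walkLem w hPz j Relation.ReflTransGen.refl with h0 | ⟨c, hc, hadj⟩
  · omega
  · exact ⟨c, hc, hadj⟩

/-- consecutive vertices are adjacent -/
lemma adj_consec (hcl : H.IsClosed) (htri : TriFree H) (hconn : H.Connected) :
    ∀ (m : ℕ) (i j : Fin n), j.val = m → i.val + 1 = j.val → H.Adj i j := by
  intro m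
  induction m using Nat.strong_induction_on with
  | _ m ih =>
    intro i j hm hij
    obtain ⟨a, haj, hadj⟩ := exists_down hcl htri hconn (j := j) (by omega)
    have haj' : a.val < j.val := haj
    rcases Nat.lt_or_ge a.val i.val with hlt | hge
    · -- a.val + 1 < j.val ; use IH at a+1
      have h1 : a.val + 1 < n := by omega
      set a' : Fin n := ⟨a.val + 1, h1⟩ with ha'
      have hAdj' : H.Adj a a' := ih (a.val + 1) (by omega) a a' rfl rfl
      have : a' = j := uniq_up hcl htri hAdj' hadj
        (by simp [ha', Fin.lt_def]) haj
      have := congrArg Fin.val this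
      simp [ha'] at this
      omega
    · have : a = i := Fin.ext (by omega)
      exact this ▸ hadj

lemma adj_iff (hcl : H.IsClosed) (htri : TriFree H) (hconn : H.Connected)
    (a b : Fin n) : H.Adj a b ↔ a.val + 1 = b.val ∨ b.val + 1 = a.val := by
  constructor
  · intro h
    rcases h.ne.lt_or_gt with hlt | hgt
    · left
      have hb : 0 < b.val := by
        have := (Fin.lt_def.mp hlt); omega
      have hbn : b.val - 1 < n := by omega
      have hp : H.Adj ⟨b.val - 1, hbn⟩ b :=
        adj_consec hcl htri hconn b.val ⟨b.val - 1, hbn⟩ b rfl (by simp; omega)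
      have := uniq_down hcl htri h hp hlt (by simp [Fin.lt_def]; omega)
      have := congrArg Fin.val this
      simp at this
      omega
    · right
      have ha : 0 < a.val := by
        have := (Fin.lt_def.mp hgt); omega
      have han : a.val - 1 < n := by omega
      have hp : H.Adj ⟨a.val - 1, han⟩ a :=
        adj_consec hcl htri hconn a.val ⟨a.val - 1, han⟩ a rfl (by simp; omega)
      have := uniq_down hcl htri h.symm hp hgt (by simp [Fin.lt_def]; omega)
      have := congrArg Fin.val this
      simp at this
      omega
  · rintro (h | h)
    · exact adj_consec hcl htri hconn b.val a b rfl h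
    · exact (adj_consec hcl htri hconn a.val b a rfl h).symm

lemma eq_pathGraph (hcl : H.IsClosed) (htri : TriFree H) (hconn : H.Connected) :
    H = SimpleGraph.pathGraph n := by
  ext a b
  rw [adj_iff hcl htri hconn, SimpleGraph.pathGraph_adj]

end ClosedPathAux

/-- A connected bipartite graph is closed (i.e. some relabeling of its vertices is
closed with respect to the labeling) if and only if it is a path graph. -/
theorem closed_bipartite_iff_path {n : ℕ} (G : SimpleGraph (Fin n))
    (hconn : G.Connected) (hbip : G.Colorable 2) :
    (∃ φ : Fin n ≃ Fin n, (G.map φ.toEmbedding).IsClosed) ↔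
      Nonempty (G ≃g SimpleGraph.pathGraph n) := by
  constructor
  · rintro ⟨φ, hclosed⟩
    set H := G.map φ.toEmbedding with hH
    have e : G ≃g H := by
      refine ⟨φ, ?_⟩
      intro a b
      simp only [hH, SimpleGraph.map_adj, Equiv.coe_toEmbedding]
      constructor
      · rintro ⟨-, u, v, huv, hu, hv⟩
        rwa [φ.injective hu, φ.injective hv] at huv
      · intro h
        exact ⟨φ.injective.ne h.ne, a, b, h, rfl, rfl⟩
    have hHconn : H.Connected := e.connected_iff.mp hconn
    have htri : ClosedPathAux.TriFree H := by
      intro a b c hab hbc hac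
      obtain ⟨C⟩ := hbip
      have h1 := C.valid (e.symm.map_adj_iff.mpr hab)
      have h2 := C.valid (e.symm.map_adj_iff.mpr hbc)
      have h3 := C.valid (e.symm.map_adj_iff.mpr hac)
      have := (C (e.symm a)).isLt
      have := (C (e.symm b)).isLt
      have := (C (e.symm c)).isLt
      omega
    have := ClosedPathAux.eq_pathGraph hclosed htri hHconn
    exact ⟨this ▸ e⟩
  · rintro ⟨e⟩
    refine ⟨e.toEquiv, ?_⟩
    have hmap : G.map e.toEquiv.toEmbedding = SimpleGraph.pathGraph n := by
      ext a b
      simp only [SimpleGraph.map_adj, Equiv.coe_toEmbedding]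
      constructor
      · rintro ⟨-, u, v, huv, rfl, rfl⟩
        exact e.map_adj_iff.mpr huv
      · intro h
        exact ⟨h.ne, e.symm a, e.symm b, e.symm.map_adj_iff.mpr h, by simp, by simp⟩
    rw [hmap]
    intro i j k l hij hkl h1 h2
    rw [SimpleGraph.pathGraph_adj] at hij hkl
    have h1' := Fin.lt_def.mp h1
    have h2' := Fin.lt_def.mp h2
    constructor
    · intro hik hjl
      exact absurd (Fin.ext (by have := congrArg Fin.val hik; omega)) hjl
    · intro hjl hik
      exact absurd (Fin.ext (by have := congrArg Fin.val hjl; omega)) hik
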